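/- In ℓ²(ℕ) with the subspaces A = {(x₁, x₂, x₂, x₃, x₃, …)} and B = {(x₁, x₁, x₂, x₂, …)}, there exists a sequence (b_n) in B with dist(b_n, A) → 0 but dist(b_n, A ∩ B) → ∞; concretely, for b_n = (1, 1, 1 − 1/n, 1 − 1/n, 1 − 2/n, 1 − 2/n, …, 1/n, 1/n, 0, 0, …) and a_n = (1, 1 − 1/n, 1 − 1/n, 1 − 2/n, 1 − 2/n, …, 1/n, 0, 0, …) one has ‖b_n − a_n‖ = n^{−1/2} and ‖b_n‖ → ∞. -/

import Mathlib

open Filter Metric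
open scoped ENNReal

noncomputable section StmtAux

private def bf (n : ℕ) : ℕ → ℂ := fun j =>
  if j < 2 * n then (1 : ℂ) - ((j / 2 : ℕ) : ℂ) / (n : ℂ) else 0

private def af (n : ℕ) : ℕ → ℂ := fun j =>
  if j < 2 * n - 1 then (1 : ℂ) - (((j + 1) / 2 : ℕ) : ℂ) / (n : ℂ) else 0

private lemma memlp_of_bdd_supp (f : ℕ → ℂ) (N : ℕ) (h : ∀ j, N ≤ j → f j = 0) :
    Memℓp f 2 := by
  apply memℓp_gen
  apply summable_of_ne_finset_zero (s := Finset.range N)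
  intro j hj
  simp only [Finset.mem_range, not_lt] at hj
  rw [h j hj]
  simp

private lemma hbf (n : ℕ) : Memℓp (bf n) 2 :=
  memlp_of_bdd_supp _ (2 * n) (fun j hj => by simp [bf, Nat.not_lt.2 hj])

private lemma haf (n : ℕ) : Memℓp (af n) 2 :=
  memlp_of_bdd_supp _ (2 * n) (fun j hj => by
    simp only [af, ite_eq_right_iff]
    intro hlt; omega)

private lemma sum_odd_const (c : ℝ) (m : ℕ) :
    ∑ j ∈ Finset.range (2 * m), (if j % 2 = 1 then c else 0) = m * c := by
  induction m with
  | zero => simp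
  | succ m ih =>
    have : 2 * (m + 1) = (2 * m + 1) + 1 := by ring
    rw [this, Finset.sum_range_succ, Finset.sum_range_succ, ih]
    have h1 : (2 * m) % 2 = 0 := by omega
    have h2 : (2 * m + 1) % 2 = 1 := by omega
    rw [h1, h2]
    push_cast
    ring_nf

private lemma diff_eq (n : ℕ) (hn : 1 ≤ n) (j : ℕ) :
    bf n j - af n j = if j % 2 = 1 ∧ j < 2 * n then (1 : ℂ) / (n : ℂ) else 0 := by
  have hn0 : (n : ℂ) ≠ 0 := by exact_mod_cast (Nat.pos_of_ne_zero (by omega)).ne'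
  rcases Nat.even_or_odd j with ⟨k, hk⟩ | ⟨k, hk⟩
  · -- even : j = k + k
    have hj2 : j / 2 = k := by omega
    have hj12 : (j + 1) / 2 = k := by omega
    have hm : j % 2 = 0 := by omega
    simp only [bf, af, hj2, hj12, hm]
    by_cases h : j < 2 * n
    · have h' : j < 2 * n - 1 := by omega
      simp [h, h']
    · have h' : ¬ j < 2 * n - 1 := by omega
      simp [h, h']
  · -- odd : j = 2k + 1
    have hj2 : j / 2 = k := by omega
    have hj12 : (j + 1) / 2 = k + 1 := by omega
    have hm : j % 2 = 1 := by omega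
    simp only [bf, af, hj2, hj12, hm]
    by_cases h : j < 2 * n
    · by_cases h' : j < 2 * n - 1
      · simp only [h, h', if_true, true_and]
        push_cast
        field_simp
        ring
      · -- here k = n - 1
        have hk1 : k + 1 = n := by omega
        simp only [h, h', if_false, if_true, true_and, sub_zero]
        have : (k : ℂ) = (n : ℂ) - 1 := by
          rw [← hk1]; push_cast; ring
        rw [this]
        field_simp
        ring
    · have h' : ¬ j < 2 * n - 1 := by omega
      simp [h, h']

private lemma two_toReal : (2 : ℝ≥0∞).toReal = 2 := by simp

end StmtAux

/-- In `ℓ²(ℕ)` with the pair-repeating subspaces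
`A = {f | f (2k+1) = f (2k+2) for all k}` and `B = {f | f (2k) = f (2k+1) for all k}`,
there is a sequence `(b n)` in `B`, concretely
`b n = (1, 1, 1 − 1/n, 1 − 1/n, …, 1/n, 1/n, 0, 0, …)` (the `j`-th entry being
`1 − ⌊j/2⌋/n` for `j < 2n` and `0` otherwise), such that `dist(b n, A) → 0`
(witnessed by `a n ∈ A` with `‖b n − a n‖ = n^{-1/2}`), while
`dist(b n, A ∩ B) → ∞` and `‖b n‖ → ∞`. -/
theorem stmt_2 :
    ∃ b : ℕ → lp (fun _ : ℕ => ℂ) 2,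
      (∀ n k : ℕ, (b n) (2 * k) = (b n) (2 * k + 1)) ∧
      (∀ n : ℕ, 1 ≤ n → ∀ j : ℕ,
        (b n) j = if j < 2 * n then (1 : ℂ) - ((j / 2 : ℕ) : ℂ) / (n : ℂ) else 0) ∧
      (∀ n : ℕ, 1 ≤ n → ∃ a : lp (fun _ : ℕ => ℂ) 2,
        (∀ k : ℕ, a (2 * k + 1) = a (2 * k + 2)) ∧
        ‖b n - a‖ = (n : ℝ) ^ (-(1/2 : ℝ))) ∧
      Tendsto (fun n => infDist (b n)
        {f : lp (fun _ : ℕ => ℂ) 2 | ∀ k : ℕ, f (2 * k + 1) = f (2 * k + 2)})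
        atTop (nhds 0) ∧
      Tendsto (fun n => infDist (b n)
        ({f : lp (fun _ : ℕ => ℂ) 2 | ∀ k : ℕ, f (2 * k + 1) = f (2 * k + 2)} ∩
         {f : lp (fun _ : ℕ => ℂ) 2 | ∀ k : ℕ, f (2 * k) = f (2 * k + 1)}))
        atTop atTop ∧
      Tendsto (fun n => ‖b n‖) atTop atTop := by
  classical
  set b : ℕ → lp (fun _ : ℕ => ℂ) 2 := fun n => ⟨bf n, hbf n⟩ with hbdef
  have happ : ∀ n j, (b n) j = bf n j := fun n j => rfl
  have h2t : (0:ℝ) < (2 : ℝ≥0∞).toReal := by rw [two_toReal]; norm_num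
  -- the approximating element of A, and the norm computation
  have key : ∀ n : ℕ, 1 ≤ n → ∃ a : lp (fun _ : ℕ => ℂ) 2,
      (∀ k : ℕ, a (2 * k + 1) = a (2 * k + 2)) ∧
      ‖b n - a‖ = (n : ℝ) ^ (-(1/2 : ℝ)) := by
    intro n hn
    have hnR : (0:ℝ) < (n : ℝ) := by exact_mod_cast Nat.pos_of_ne_zero (by omega)
    refine ⟨⟨af n, haf n⟩, ?_, ?_⟩
    · intro k
      show af n (2 * k + 1) = af n (2 * k + 2)
      simp only [af]
      have e1 : (2 * k + 1 + 1) / 2 = k + 1 := by omega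
      have e2 : (2 * k + 2 + 1) / 2 = k + 1 := by omega
      rw [e1, e2]
      by_cases h : 2 * k + 1 < 2 * n - 1
      · rw [if_pos h, if_pos (by omega)]
      · rw [if_neg h, if_neg (by omega)]
    · have hdiff : ∀ j, ((b n - ⟨af n, haf n⟩ : lp (fun _ : ℕ => ℂ) 2) : ∀ _ : ℕ, ℂ) j
          = bf n j - af n j := fun j => rfl
      rw [lp.norm_eq_tsum_rpow h2t]
      simp only [hdiff, two_toReal]
      have hvanish : ∀ j ∉ Finset.range (2 * n), ‖bf n j - af n j‖ ^ (2:ℝ) = 0 := by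
        intro j hj
        simp only [Finset.mem_range, not_lt] at hj
        rw [diff_eq n hn j, if_neg (by omega)]
        simp
      rw [tsum_eq_sum hvanish]
      have hterm : ∀ j ∈ Finset.range (2 * n), ‖bf n j - af n j‖ ^ (2:ℝ)
          = if j % 2 = 1 then ((1:ℝ)/n) ^ (2:ℝ) else 0 := by
        intro j hj
        simp only [Finset.mem_range] at hj
        rw [diff_eq n hn j]
        by_cases h : j % 2 = 1
        · rw [if_pos ⟨h, hj⟩, if_pos h]
          congr 1
          rw [norm_div, norm_one]
          congr 1
          simp
        · rw [if_neg (by tauto), if_neg h]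
          simp
      rw [Finset.sum_congr rfl hterm, sum_odd_const]
      have e3 : (n:ℝ) * ((1:ℝ)/n) ^ (2:ℝ) = (n:ℝ)⁻¹ := by
        rw [Real.rpow_two]
        field_simp
      rw [e3, ← Real.rpow_neg_one (n:ℝ), ← Real.rpow_mul hnR.le]
      norm_num
  refine ⟨b, ?_, ?_, key, ?_, ?_, ?_⟩
  · intro n k
    rw [happ, happ]
    simp only [bf]
    have e1 : (2 * k) / 2 = k := by omega
    have e2 : (2 * k + 1) / 2 = k := by omega
    rw [e1, e2]
    by_cases h : 2 * k < 2 * n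
    · rw [if_pos h, if_pos (by omega)]
    · rw [if_neg h, if_neg (by omega)]
  · intro n _ j
    rfl
  · -- dist to A tends to 0
    have hlim : Tendsto (fun n : ℕ => (n:ℝ) ^ (-(1/2 : ℝ))) atTop (nhds 0) :=
      (tendsto_rpow_neg_atTop (by norm_num : (0:ℝ) < 1/2)).comp tendsto_natCast_atTop_atTop
    refine tendsto_of_tendsto_of_tendsto_of_le_of_le' tendsto_const_nhds hlim
      (Eventually.of_forall fun n => infDist_nonneg) ?_
    filter_upwards [eventually_ge_atTop 1] with n hn
    obtain ⟨a, ha, hnorm⟩ := key n hn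
    calc infDist (b n) {f : lp (fun _ : ℕ => ℂ) 2 | ∀ k : ℕ, f (2*k+1) = f (2*k+2)}
        ≤ dist (b n) a := infDist_le_dist_of_mem ha
      _ = ‖b n - a‖ := dist_eq_norm _ _
      _ = (n : ℝ) ^ (-(1/2 : ℝ)) := hnorm
  all_goals {
    have hAB : ({f : lp (fun _ : ℕ => ℂ) 2 | ∀ k : ℕ, f (2 * k + 1) = f (2 * k + 2)} ∩
         {f : lp (fun _ : ℕ => ℂ) 2 | ∀ k : ℕ, f (2 * k) = f (2 * k + 1)})
        = {(0 : lp (fun _ : ℕ => ℂ) 2)} := by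
      ext f
      simp only [Set.mem_inter_iff, Set.mem_setOf_eq, Set.mem_singleton_iff]
      constructor
      · rintro ⟨hA, hB⟩
        have hstep : ∀ j, f (j + 1) = f j := by
          intro j
          rcases Nat.even_or_odd j with ⟨k, hk⟩ | ⟨k, hk⟩
          · have hj : j = 2 * k := by omega
            rw [hj]; exact (hB k).symm
          · have hj : j = 2 * k + 1 := by omega
            rw [hj, show 2 * k + 1 + 1 = 2 * k + 2 from rfl]
            exact (hA k).symm
        have hconst : ∀ j, f j = f 0 := by
          intro j
          induction j with
          | zero => rfl
          | succ m ih => rw [hstep m, ih]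
        have hsumm : Summable (fun _ : ℕ => ‖f 0‖ ^ ((2:ℝ≥0∞).toReal)) := by
          have h := (memℓp_gen_iff h2t).1 (lp.memℓp f)
          have he : (fun i : ℕ => ‖f i‖ ^ ((2:ℝ≥0∞).toReal))
              = fun _ : ℕ => ‖f 0‖ ^ ((2:ℝ≥0∞).toReal) := by
            funext i; rw [hconst i]
          rwa [he] at h
        have h0 : ‖f 0‖ ^ ((2:ℝ≥0∞).toReal) = 0 :=
          tendsto_nhds_unique tendsto_const_nhds hsumm.tendsto_atTop_zero
        have hf0 : f 0 = 0 := by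
          rw [two_toReal, Real.rpow_two] at h0
          have := (pow_eq_zero_iff two_ne_zero).mp h0
          simpa using this
        apply lp.ext
        funext j
        rw [hconst j, hf0]
        rfl
      · rintro rfl
        constructor <;> intro k <;> simp
    have hge : ∀ n : ℕ, 1 ≤ n → (n:ℝ) ^ ((1:ℝ)/2) / 2 ≤ ‖b n‖ := by
      intro n hn
      have hnR : (0:ℝ) < (n : ℝ) := by exact_mod_cast Nat.pos_of_ne_zero (by omega)
      have hsum : Summable (fun i : ℕ => ‖bf n i‖ ^ ((2:ℝ≥0∞).toReal)) :=
        (memℓp_gen_iff h2t).1 (hbf n)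
      have hlow : ∀ j ∈ Finset.range n, ((1:ℝ)/2) ^ ((2:ℝ≥0∞).toReal) ≤ ‖bf n j‖ ^ ((2:ℝ≥0∞).toReal) := by
        intro j hj
        simp only [Finset.mem_range] at hj
        have hk2 : 2 * (j / 2) ≤ j := by omega
        have hval : bf n j = (((1 - ((j/2 : ℕ):ℝ)/n : ℝ)) : ℂ) := by
          simp only [bf, if_pos (by omega : j < 2 * n)]
          push_cast
          ring
        have hhalf : ((j/2 : ℕ) : ℝ) / n ≤ 1/2 := by
          rw [div_le_iff₀ hnR]
          have : (2 * (j / 2) : ℕ) ≤ n := by omega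
          have h2 : ((2 * (j / 2) : ℕ) : ℝ) ≤ (n : ℝ) := by exact_mod_cast this
          push_cast at h2
          linarith
        have hnn : (0:ℝ) ≤ ((j/2 : ℕ) : ℝ) / n := by positivity
        have hnorm : ‖bf n j‖ = 1 - ((j/2 : ℕ) : ℝ)/n := by
          rw [hval, Complex.norm_real, Real.norm_of_nonneg (by linarith)]
        apply Real.rpow_le_rpow (by norm_num)
        · rw [hnorm]; linarith
        · rw [two_toReal]; norm_num
      have hsum_lb : (n : ℝ) * (((1:ℝ)/2) ^ ((2:ℝ≥0∞).toReal))
          ≤ ∑ j ∈ Finset.range n, ‖bf n j‖ ^ ((2:ℝ≥0∞).toReal) := by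
        calc (n : ℝ) * (((1:ℝ)/2) ^ ((2:ℝ≥0∞).toReal))
            = ∑ _j ∈ Finset.range n, ((1:ℝ)/2) ^ ((2:ℝ≥0∞).toReal) := by
              rw [Finset.sum_const, Finset.card_range, nsmul_eq_mul]
          _ ≤ _ := Finset.sum_le_sum hlow
      have hts : ∑ j ∈ Finset.range n, ‖bf n j‖ ^ ((2:ℝ≥0∞).toReal)
          ≤ ∑' j, ‖bf n j‖ ^ ((2:ℝ≥0∞).toReal) :=
        hsum.sum_le_tsum _ (fun i _ => Real.rpow_nonneg (norm_nonneg _) _)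
      have hpow : ‖b n‖ ^ ((2:ℝ≥0∞).toReal) = ∑' j, ‖bf n j‖ ^ ((2:ℝ≥0∞).toReal) :=
        lp.norm_rpow_eq_tsum h2t (b n)
      have hq : (n:ℝ) / 4 ≤ ‖b n‖ ^ (2:ℕ) := by
        have h14 : ((1:ℝ)/2) ^ ((2:ℝ≥0∞).toReal) = 1/4 := by
          rw [two_toReal, Real.rpow_two]; norm_num
        have := le_trans (le_trans hsum_lb hts) (le_of_eq hpow.symm)
        rw [h14] at this
        rw [two_toReal, Real.rpow_two] at this
        calc (n:ℝ)/4 = (n:ℝ) * (1/4) := by ring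
          _ ≤ _ := by exact_mod_cast this
      have hq2 : ((n:ℝ) ^ ((1:ℝ)/2) / 2) ^ (2:ℕ) ≤ ‖b n‖ ^ (2:ℕ) := by
        have : ((n:ℝ) ^ ((1:ℝ)/2) / 2) ^ (2:ℕ) = (n:ℝ)/4 := by
          rw [div_pow, ← Real.rpow_natCast ((n:ℝ) ^ ((1:ℝ)/2)) 2, ← Real.rpow_mul hnR.le]
          norm_num
        rw [this]; exact hq
      have ha : (0:ℝ) ≤ (n:ℝ) ^ ((1:ℝ)/2) / 2 := by positivity
      exact (pow_le_pow_iff_left₀ ha (norm_nonneg _) two_ne_zero).mp hq2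
    have htend : Tendsto (fun n : ℕ => (n:ℝ) ^ ((1:ℝ)/2) / 2) atTop atTop :=
      ((tendsto_rpow_atTop (by norm_num : (0:ℝ) < 1/2)).comp tendsto_natCast_atTop_atTop).atTop_div_const
        (by norm_num)
    have hbtend : Tendsto (fun n => ‖b n‖) atTop atTop := by
      refine tendsto_atTop_mono' atTop ?_ htend
      filter_upwards [eventually_ge_atTop 1] with n hn using hge n hn
    have heq : (fun n => infDist (b n)
          ({f : lp (fun _ : ℕ => ℂ) 2 | ∀ k : ℕ, f (2 * k + 1) = f (2 * k + 2)} ∩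
           {f : lp (fun _ : ℕ => ℂ) 2 | ∀ k : ℕ, f (2 * k) = f (2 * k + 1)}))
          = fun n => ‖b n‖ := by
      funext n
      rw [hAB, infDist_singleton, dist_zero_right]
    try rw [heq]
    exact hbtend
  }
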